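/- arXiv:2111.10482 — 4 statements merged into one kernel-verified Lean document; each statement's English description precedes it below -/
import Mathlib

section
/- Let q : X → Y be a continuous, closed, surjective map between topological spaces. If Y is a D-space and for every y ∈ Y the fiber q⁻¹(y), with the subspace topology from X, is a D-space, then X is a D-space. -/
open TopologicalSpace Set Cardinal

universe u v

/-- `U` is a neighbornet (neighborhood assignment): each `U x` is open and contains `x`. -/
def IsNeighbornet {X : Type*} [TopologicalSpace X] (U : X → Set X) : Prop :=
  ∀ x, IsOpen (U x) ∧ x ∈ U x

/-- A space is a D-space if every neighbornet admits a closed discrete kernel. -/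
def IsDSpace (X : Type*) [TopologicalSpace X] : Prop :=
  ∀ U : X → Set X, IsNeighbornet U →
    ∃ D : Set X, IsClosed D ∧ DiscreteTopology D ∧ (⋃ x ∈ D, U x) = Set.univ

/-- A space is hereditarily D if every subspace is a D-space. -/
def HereditarilyD (X : Type*) [TopologicalSpace X] : Prop :=
  ∀ A : Set X, IsDSpace A

/-- The box product: the product set with the box topology. -/
def BoxProd (X : ℕ → Type*) : Type _ := ∀ n, X n

instance boxTopology (X : ℕ → Type*) [∀ n, TopologicalSpace (X n)] :
    TopologicalSpace (BoxProd X) :=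
  TopologicalSpace.generateFrom
    {S | ∃ U : ∀ n, Set (X n), (∀ n, IsOpen (U n)) ∧ S = {f : BoxProd X | ∀ n, f n ∈ U n}}

/-- Mod finite equivalence on countable products. -/
def nablaSetoid (X : ℕ → Type*) : Setoid (∀ n, X n) where
  r f g := {n | f n ≠ g n}.Finite
  iseqv := ⟨fun f => by simp,
    fun {f g} h => h.subset fun n hn e => hn e.symm,
    fun {f g h} h1 h2 => (h1.union h2).subset fun n hn => by
      by_contra hc
      simp only [Set.mem_union, Set.mem_setOf_eq] at hc
      push_neg at hc
      exact hn (hc.1.trans hc.2)⟩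

/-- The nabla product: the box product quotiented by mod finite equivalence. -/
def NablaProd (X : ℕ → Type*) [∀ n, TopologicalSpace (X n)] : Type _ :=
  Quotient (nablaSetoid X)

instance nablaTopology (X : ℕ → Type*) [∀ n, TopologicalSpace (X n)] :
    TopologicalSpace (NablaProd X) :=
  TopologicalSpace.coinduced
    (fun f : BoxProd X => Quotient.mk (nablaSetoid X) f) inferInstance

/-- `U` is below `T` if `U x ⊆ T x` for every `x`. -/
def IsBelow {X : Type*} [TopologicalSpace X] (U T : X → Set X) : Prop :=
  ∀ x, U x ⊆ T x

/-- `D` is `U`-sticky: closed discrete, and whenever `U x` meets `D`, `x ∈ U(D)`. -/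
def USticky {X : Type*} [TopologicalSpace X] (U : X → Set X) (D : Set X) : Prop :=
  IsClosed D ∧ DiscreteTopology D ∧ ∀ x, (U x ∩ D).Nonempty → x ∈ ⋃ d ∈ D, U d

/-- `S` is super-sticky below `T`. -/
def SuperSticky {X : Type*} [TopologicalSpace X] (T : X → Set X) (S : Set X) : Prop :=
  IsClosed S ∧ DiscreteTopology S ∧
    ∀ U : X → Set X, IsNeighbornet U → IsBelow U T → ∀ x, (U x ∩ S).Nonempty → x ∈ S

/-- A space is scattered if every nonempty subset has a point isolated in it. -/
def Scattered (X : Type*) [TopologicalSpace X] : Prop :=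
  ∀ S : Set X, S.Nonempty → ∃ x ∈ S, ∃ U : Set X, IsOpen U ∧ U ∩ S = {x}

/-- One step of the Cantor–Bendixson derivative: remove the isolated points of `S`. -/
def derivStep (X : Type*) [TopologicalSpace X] (S : Set X) : Set X :=
  {x ∈ S | ¬ ∃ U : Set X, IsOpen U ∧ U ∩ S = {x}}

/-- The Cantor–Bendixson derivatives `X^(o)`. -/
noncomputable def cbDeriv (X : Type*) [TopologicalSpace X] (o : Ordinal.{0}) : Set X :=
  Ordinal.lt_wf.fix
    (fun _ ih => ⋂ (o' : Ordinal) (h : o' < _), derivStep X (ih o' h)) o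

/-- The Cantor–Bendixson (scattered) height of a point. -/
noncomputable def cbHeight {X : Type*} [TopologicalSpace X] (x : X) : Ordinal.{0} :=
  sSup {o | x ∈ cbDeriv X o}

/-- The dominating number 𝔡. -/
noncomputable def domNum : Cardinal.{0} :=
  sInf {c : Cardinal | ∃ D : Set (ℕ → ℕ), c = #D ∧
    ∀ f : ℕ → ℕ, ∃ g ∈ D, ∀ n, f n ≤ g n}

/-- The weight of a space: least cardinality of a base. -/
noncomputable def weight (X : Type u) [TopologicalSpace X] : Cardinal.{u} :=
  sInf {c | ∃ B : Set (Set X), c = #B ∧ TopologicalSpace.IsTopologicalBasis B}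

/-- The extent of a space: sup of cardinalities of closed discrete subsets. -/
noncomputable def extent (Y : Type u) [TopologicalSpace Y] : Cardinal.{u} :=
  sSup {c | ∃ C : Set Y, IsClosed C ∧ DiscreteTopology C ∧ c = #C}

/-- A relation `R` is nearly good. -/
def NearlyGood {Y : Type*} [TopologicalSpace Y] (R : Y → Y → Prop) : Prop :=
  ∀ A : Set Y, ∀ x ∈ closure A, ∃ y ∈ A, R x y

/-- `Z` is `U`-close. -/
def UClose {Y : Type*} [TopologicalSpace Y] (U : Y → Set Y) (Z : Set Y) : Prop :=
  ∀ x ∈ Z, Z ⊆ U x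

/-- The G_δ modification of a topology. -/
def gdeltaTop (X : Type u) [TopologicalSpace X] : TopologicalSpace X :=
  TopologicalSpace.generateFrom
    {S | ∃ U : ℕ → Set X, (∀ n, IsOpen (U n)) ∧ S = ⋂ n, U n}

/-- The countable box topology on `L → K` over a discrete space `K`. -/
def ctbBoxTop (L K : Type*) : TopologicalSpace (L → K) :=
  TopologicalSpace.generateFrom
    {S | ∃ (x : L → K) (C : Set L), C.Countable ∧ S = {y | ∀ γ ∈ C, y γ = x γ}}

/-- Auxiliary: discreteness of a subset in terms of open sets of the ambient space. -/
lemma discreteTopology_iff_aux {Z : Type*} [TopologicalSpace Z] {S : Set Z} :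
    DiscreteTopology S ↔ ∀ x ∈ S, ∃ O : Set Z, IsOpen O ∧ O ∩ S = {x} := by
  rw [discreteTopology_iff_isOpen_singleton]
  constructor
  · intro h x hx
    obtain ⟨O, hO, hOeq⟩ := isOpen_induced_iff.mp (h ⟨x, hx⟩)
    refine ⟨O, hO, ?_⟩
    ext z
    constructor
    · rintro ⟨hzO, hzS⟩
      have : (⟨z, hzS⟩ : S) ∈ Subtype.val ⁻¹' O := hzO
      rw [hOeq] at this
      simpa using congrArg Subtype.val this
    · rintro rfl
      have : (⟨z, hx⟩ : S) ∈ Subtype.val ⁻¹' O := by rw [hOeq]; rfl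
      exact ⟨this, hx⟩
  · rintro h ⟨x, hx⟩
    obtain ⟨O, hO, hOeq⟩ := h x hx
    refine isOpen_induced_iff.mpr ⟨O, hO, ?_⟩
    ext ⟨z, hz⟩
    simp only [Set.mem_preimage, Set.mem_singleton_iff, Subtype.mk.injEq]
    constructor
    · intro hzO
      have : z ∈ O ∩ S := ⟨hzO, hz⟩
      rw [hOeq] at this; exact this
    · rintro rfl
      have : z ∈ O ∩ S := by rw [hOeq]; rfl
      exact this.1

/-- If `q : X → Y` is continuous, closed and surjective, `Y` is a D-space, and every
fiber `q ⁻¹' {y}` is a D-space in the subspace topology, then `X` is a D-space. -/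
theorem closed_preimage_of_DSpace {X Y : Type*} [TopologicalSpace X] [TopologicalSpace Y]
    (q : X → Y) (hcont : Continuous q) (hclosed : IsClosedMap q)
    (hsurj : Function.Surjective q) (hY : IsDSpace Y)
    (hfib : ∀ y : Y, IsDSpace (q ⁻¹' {y} : Set X)) :
    IsDSpace X := by
  intro U hU
  have hfib' : ∀ y : Y, ∃ D : Set (q ⁻¹' {y} : Set X), IsClosed D ∧ DiscreteTopology D ∧
      (⋃ x ∈ D, (Subtype.val ⁻¹' U x.val : Set (q ⁻¹' {y}))) = Set.univ := fun y =>
    hfib y (fun x => Subtype.val ⁻¹' U x.val)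
      (fun x => ⟨(hU x.val).1.preimage continuous_subtype_val, (hU x.val).2⟩)
  choose D' hD'cl hD'disc hD'cov using hfib'
  set Dy : Y → Set X := fun y => Subtype.val '' D' y with hDydef
  have hDysub : ∀ y, Dy y ⊆ q ⁻¹' {y} := by
    rintro y z ⟨w, _, rfl⟩; exact w.2
  have hDycov : ∀ y, q ⁻¹' {y} ⊆ ⋃ d ∈ Dy y, U d := by
    intro y x hx
    have : (⟨x, hx⟩ : (q ⁻¹' {y} : Set X)) ∈
        ⋃ d ∈ D' y, (Subtype.val ⁻¹' U d.val : Set (q ⁻¹' {y})) := by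
      rw [hD'cov y]; trivial
    rw [Set.mem_iUnion₂] at this
    obtain ⟨d, hd, hxd⟩ := this
    exact Set.mem_biUnion (show (d : X) ∈ Dy y from ⟨d, hd, rfl⟩) hxd
  set V : Y → Set Y := fun y => (q '' (⋃ d ∈ Dy y, U d)ᶜ)ᶜ with hVdef
  have hVnbhd : IsNeighbornet V := by
    intro y
    constructor
    · exact (hclosed _ (isOpen_biUnion fun d _ => (hU d).1).isClosed_compl).isOpen_compl
    · intro hmem
      obtain ⟨x, hx, rfl⟩ := hmem
      exact hx (hDycov (q x) rfl)
  have hVkey : ∀ x y, q x ∈ V y → x ∈ ⋃ d ∈ Dy y, U d := by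
    intro x y hxy
    by_contra hc
    exact hxy ⟨x, hc, rfl⟩
  obtain ⟨E, hEcl, hEdisc, hEcov⟩ := hY V hVnbhd
  set D : Set X := ⋃ y ∈ E, Dy y with hDdef
  have hDsubE : D ⊆ q ⁻¹' E := by
    rintro z hz
    obtain ⟨y, hy, hzy⟩ := by simpa [hDdef] using hz
    have := hDysub y hzy
    simp only [Set.mem_preimage, Set.mem_singleton_iff] at this
    simp [Set.mem_preimage, this, hy]
  -- the key per-point facts
  have hkeyW : ∀ y ∈ E, ∃ W : Set Y, IsOpen W ∧ y ∈ W ∧ q ⁻¹' W ∩ D ⊆ Dy y := by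
    intro y hy
    obtain ⟨W, hWopen, hWE⟩ := discreteTopology_iff_aux.mp hEdisc y hy
    have hyW : y ∈ W := by
      have : y ∈ W ∩ E := by rw [hWE]; rfl
      exact this.1
    refine ⟨W, hWopen, hyW, ?_⟩
    rintro z ⟨hzW, hzD⟩
    obtain ⟨y', hy', hzy'⟩ := by simpa [hDdef] using hzD
    have hqz : q z = y' := hDysub y' hzy'
    have : y' ∈ W ∩ E := ⟨hqz ▸ hzW, hy'⟩
    rw [hWE] at this
    rwa [← this]
  have hcase_a : ∀ x ∉ D, ∃ O : Set X, IsOpen O ∧ x ∈ O ∧ O ∩ D = ∅ := by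
    intro x hx
    by_cases hqx : q x ∈ E
    · obtain ⟨W, hWopen, hyW, hWD⟩ := hkeyW (q x) hqx
      have hxF : x ∈ q ⁻¹' {q x} := rfl
      have hxnD : (⟨x, hxF⟩ : (q ⁻¹' {q x} : Set X)) ∉ D' (q x) := by
        intro h
        exact hx (Set.mem_biUnion hqx ⟨⟨x, hxF⟩, h, rfl⟩)
      obtain ⟨O, hOopen, hOeq⟩ := isOpen_induced_iff.mp (hD'cl (q x)).isOpen_compl
      have hxO : x ∈ O := by
        have : (⟨x, hxF⟩ : (q ⁻¹' {q x} : Set X)) ∈ Subtype.val ⁻¹' O := by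
          rw [hOeq]; exact hxnD
        exact this
      refine ⟨O ∩ q ⁻¹' W, hOopen.inter (hWopen.preimage hcont), ⟨hxO, hyW⟩, ?_⟩
      ext z
      simp only [Set.mem_inter_iff, Set.mem_empty_iff_false, iff_false, not_and, and_imp]
      intro hzO hzW hzD
      have hzDy : z ∈ Dy (q x) := hWD ⟨hzW, hzD⟩
      obtain ⟨w, hw, rfl⟩ := hzDy
      have : w ∈ Subtype.val ⁻¹' O := hzO
      rw [hOeq] at this
      exact this hw
    · refine ⟨q ⁻¹' Eᶜ, hEcl.isOpen_compl.preimage hcont, hqx, ?_⟩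
      ext z
      simp only [Set.mem_inter_iff, Set.mem_preimage, Set.mem_compl_iff,
        Set.mem_empty_iff_false, iff_false, not_and]
      intro hz hzD
      exact hz (hDsubE hzD)
  have hcase_b : ∀ x ∈ D, ∃ O : Set X, IsOpen O ∧ O ∩ D = {x} := by
    intro x hx
    obtain ⟨y, hy, hxy⟩ := by simpa [hDdef] using hx
    have hqx : q x = y := hDysub y hxy
    subst hqx
    obtain ⟨W, hWopen, hyW, hWD⟩ := hkeyW (q x) hy
    obtain ⟨w, hw, hweq⟩ := hxy
    obtain ⟨O₁, hO₁open, hO₁eq⟩ := discreteTopology_iff_aux.mp (hD'disc (q x)) w hw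
    obtain ⟨O, hOopen, hOeq⟩ := isOpen_induced_iff.mp hO₁open
    have hwO₁ : w ∈ O₁ := by
      have : w ∈ O₁ ∩ D' (q x) := by rw [hO₁eq]; rfl
      exact this.1
    have hxO : x ∈ O := by
      have h2 : (w : X) ∈ O := by
        have : w ∈ Subtype.val ⁻¹' O := by rw [hOeq]; exact hwO₁
        exact this
      rwa [hweq] at h2
    refine ⟨O ∩ q ⁻¹' W, hOopen.inter (hWopen.preimage hcont), ?_⟩
    ext z
    simp only [Set.mem_inter_iff, Set.mem_preimage, Set.mem_singleton_iff]
    constructor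
    · rintro ⟨⟨hzO, hzW⟩, hzD⟩
      have hzDy : z ∈ Dy (q x) := hWD ⟨hzW, hzD⟩
      obtain ⟨w', hw', rfl⟩ := hzDy
      have h1 : w' ∈ O₁ := by
        have : w' ∈ Subtype.val ⁻¹' O := hzO
        rw [hOeq] at this; exact this
      have : w' ∈ O₁ ∩ D' (q x) := ⟨h1, hw'⟩
      rw [hO₁eq] at this
      rw [this, hweq]
    · rintro rfl
      exact ⟨⟨hxO, hyW⟩, Set.mem_biUnion hy ⟨w, hw, hweq⟩⟩
  refine ⟨D, ?_, ?_, ?_⟩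
  · rw [← isOpen_compl_iff]
    rw [isOpen_iff_forall_mem_open]
    intro x hx
    obtain ⟨O, hOopen, hxO, hOD⟩ := hcase_a x hx
    exact ⟨O, fun z hz hzD => (Set.eq_empty_iff_forall_notMem.mp hOD z) ⟨hz, hzD⟩, hOopen, hxO⟩
  · exact discreteTopology_iff_aux.mpr fun x hx => hcase_b x hx
  · apply Set.eq_univ_of_forall
    intro x
    have : q x ∈ ⋃ y ∈ E, V y := by rw [hEcov]; trivial
    obtain ⟨y, hy, hxy⟩ := by simpa using this
    obtain ⟨d, hd, hxd⟩ := by simpa using hVkey x y hxy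
    exact Set.mem_biUnion (Set.mem_biUnion hy hd) hxd
end

section
/- Suppose X_n is a compact Hausdorff space for every n ∈ ω. Then the box product □_n X_n is a D-space if and only if the nabla product ∇_n X_n is a D-space. -/
open TopologicalSpace Set Cardinal

universe u v

set_option linter.unusedSectionVars false

section Dev
variable {X : ℕ → Type*} [∀ n, TopologicalSpace (X n)]

/-- A box in the box product. -/
def bbox (U : ∀ n, Set (X n)) : Set (BoxProd X) := {f | ∀ n, f n ∈ U n}

lemma isOpen_bbox {U : ∀ n, Set (X n)} (hU : ∀ n, IsOpen (U n)) :
    IsOpen (bbox U) :=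
  TopologicalSpace.GenerateOpen.basic _ ⟨U, hU, rfl⟩

lemma exists_bbox {W : Set (BoxProd X)} (hW : IsOpen W) :
    ∀ g ∈ W, ∃ U : ∀ n, Set (X n), (∀ n, IsOpen (U n)) ∧ (∀ n, g n ∈ U n) ∧ bbox U ⊆ W := by
  have h : TopologicalSpace.GenerateOpen
      {S | ∃ U : ∀ n, Set (X n), (∀ n, IsOpen (U n)) ∧ S = {f : BoxProd X | ∀ n, f n ∈ U n}} W := hW
  induction h with
  | basic S hS =>
    obtain ⟨U, hU, rfl⟩ := hS
    exact fun g hg => ⟨U, hU, hg, fun h hh => hh⟩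
  | univ => exact fun g _ => ⟨fun n => Set.univ, fun n => isOpen_univ, fun n => trivial,
      fun _ _ => trivial⟩
  | inter S T hS hT ihS ihT =>
    intro g hg
    obtain ⟨U, hU, hgU, hUS⟩ := ihS hS g hg.1
    obtain ⟨V, hV, hgV, hVT⟩ := ihT hT g hg.2
    refine ⟨fun n => U n ∩ V n, fun n => (hU n).inter (hV n), fun n => ⟨hgU n, hgV n⟩, ?_⟩
    intro h hh
    exact ⟨hUS (fun n => (hh n).1), hVT (fun n => (hh n).2)⟩
  | sUnion S hS ih =>
    intro g hg
    obtain ⟨s, hs, hgs⟩ := hg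
    obtain ⟨U, hU, hgU, hUs⟩ := ih s hs (hS s hs) g hgs
    exact ⟨U, hU, hgU, fun h hh => ⟨s, hs, hUs hh⟩⟩

end Dev
section Dev2
variable {X : ℕ → Type*} [∀ n, TopologicalSpace (X n)]

lemma coordSet_eq (n : ℕ) (A : Set (X n)) :
    bbox (Function.update (fun i => (Set.univ : Set (X i))) n A) = {f : BoxProd X | f n ∈ A} := by
  classical
  ext f
  simp only [bbox, Set.mem_setOf_eq]
  constructor
  · intro h
    have := h n
    rwa [Function.update_self] at this
  · intro h i
    by_cases hi : i = n
    · subst hi; rwa [Function.update_self]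
    · rw [Function.update_of_ne hi]; trivial

lemma isOpen_coordSet (n : ℕ) {A : Set (X n)} (hA : IsOpen A) :
    IsOpen {f : BoxProd X | f n ∈ A} := by
  classical
  rw [← coordSet_eq]
  refine isOpen_bbox (fun i => ?_)
  by_cases hi : i = n
  · subst hi; rwa [Function.update_self]
  · rw [Function.update_of_ne hi]; exact isOpen_univ

instance boxT2 [∀ n, T2Space (X n)] : T2Space (BoxProd X) := by
  constructor
  intro f g hfg
  have : ∃ n, f n ≠ g n := by
    by_contra h
    push_neg at h
    exact hfg (funext h)
  obtain ⟨n, hn⟩ := this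
  obtain ⟨A, B, hA, hB, hfA, hgB, hAB⟩ := t2_separation hn
  refine ⟨{h : BoxProd X | h n ∈ A}, {h : BoxProd X | h n ∈ B},
    isOpen_coordSet n hA, isOpen_coordSet n hB, hfA, hgB, ?_⟩
  rw [Set.disjoint_left]
  intro x hx hx'
  exact (Set.disjoint_left.mp hAB) hx hx'

/-- the set of points agreeing with `f` from `n` on. -/
def tailSet (n : ℕ) (f : BoxProd X) : Set (BoxProd X) := {g | ∀ i, n ≤ i → g i = f i}

lemma isCompact_tailSet [∀ n, CompactSpace (X n)] (n : ℕ) (f : BoxProd X) :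
    IsCompact (tailSet n f) := by
  classical
  let e : (∀ i : Fin n, X i) → BoxProd X := fun x i =>
    if h : i < n then x ⟨i, h⟩ else f i
  have hcont : Continuous e := by
    apply continuous_generateFrom_iff.mpr
    rintro S ⟨U, hU, rfl⟩
    by_cases hf : ∀ i, n ≤ i → f i ∈ U i
    · have heq : e ⁻¹' {f | ∀ n, f n ∈ U n} = Set.pi Set.univ (fun j : Fin n => U j) := by
        ext x
        simp only [Set.mem_preimage, Set.mem_setOf_eq, Set.mem_pi, Set.mem_univ, true_implies]
        constructor
        · intro h j
          have := h j
          simpa only [e, dif_pos j.isLt, Fin.eta] using this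
        · intro h i
          by_cases hi : i < n
          · have := h ⟨i, hi⟩
            simpa only [e, dif_pos hi] using this
          · simp only [e, dif_neg hi]
            exact hf i (le_of_not_gt hi)
      rw [heq]
      exact isOpen_set_pi Set.finite_univ (fun j _ => hU j)
    · push_neg at hf
      obtain ⟨i, hi, hfi⟩ := hf
      have heq : e ⁻¹' {f | ∀ n, f n ∈ U n} = ∅ := by
        ext x
        simp only [Set.mem_preimage, Set.mem_setOf_eq, Set.mem_empty_iff_false, iff_false]
        intro h
        have := h i
        rw [show e x i = f i by simp only [e, dif_neg (not_lt.mpr hi)]] at this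
        exact hfi this
      rw [heq]; exact isOpen_empty
  have hrange : Set.range e = tailSet n f := by
    ext g
    constructor
    · rintro ⟨x, rfl⟩ i hi
      simp only [e, dif_neg (not_lt.mpr hi)]
    · intro hg
      refine ⟨fun j => g j, funext fun i => ?_⟩
      by_cases hi : i < n
      · simp only [e, dif_pos hi]
      · simp only [e, dif_neg hi]
        exact (hg i (le_of_not_gt hi)).symm
  rw [← hrange, ← Set.image_univ]
  exact isCompact_univ.image hcont

end Dev2
section Dev3
variable {X : ℕ → Type*} [∀ n, TopologicalSpace (X n)]

/-- Saturation of a set under mod-finite equivalence. -/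
def satSet (F : Set (BoxProd X)) : Set (BoxProd X) :=
  {g | ∃ f ∈ F, {i | f i ≠ g i}.Finite}

def satSetN (n : ℕ) (F : Set (BoxProd X)) : Set (BoxProd X) :=
  {g | ∃ f ∈ F, ∀ i, n ≤ i → f i = g i}

lemma satSetN_subset (n : ℕ) (F : Set (BoxProd X)) : satSetN n F ⊆ satSet F := by
  rintro g ⟨f, hf, h⟩
  refine ⟨f, hf, (Set.finite_Iio n).subset ?_⟩
  intro i hi
  simp only [Set.mem_setOf_eq] at hi
  by_contra hc
  exact hi (h i (le_of_not_gt hc))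

lemma satSet_eq_iUnion (F : Set (BoxProd X)) : satSet F = ⋃ n, satSetN n F := by
  ext g
  simp only [Set.mem_iUnion]
  constructor
  · rintro ⟨f, hf, hfin⟩
    obtain ⟨n, hn⟩ := hfin.bddAbove
    refine ⟨n + 1, f, hf, fun i hi => ?_⟩
    by_contra hc
    have := hn (Set.mem_setOf_eq ▸ hc : i ∈ {i | f i ≠ g i})
    omega
  · rintro ⟨n, hg⟩
    exact satSetN_subset n F hg

/-- Tail separation: if `g` is not in the `n`-th saturation layer of a closed set `F`,
then there is a tail-box around `g` missing that layer. -/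
lemma tail_separation [∀ n, CompactSpace (X n)] {F : Set (BoxProd X)} (hF : IsClosed F)
    {g : BoxProd X} {n : ℕ} (hg : g ∉ satSetN n F) :
    ∃ T : ∀ i, Set (X i), (∀ i, IsOpen (T i)) ∧ (∀ i, n ≤ i → g i ∈ T i) ∧
      ∀ h : BoxProd X, (∀ i, n ≤ i → h i ∈ T i) → h ∉ satSetN n F := by
  classical
  -- the tail set of g is compact and inside Fᶜ
  have hKF : tailSet n g ∩ F = ∅ := by
    ext y
    simp only [Set.mem_inter_iff, Set.mem_empty_iff_false, iff_false, not_and]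
    intro hy hyF
    exact hg ⟨y, hyF, fun i hi => hy i hi⟩
  -- choose a box around each point of the tail set inside Fᶜ
  have hbox : ∀ y ∈ tailSet n g, ∃ U : ∀ i, Set (X i),
      (∀ i, IsOpen (U i)) ∧ (∀ i, y i ∈ U i) ∧ bbox U ⊆ Fᶜ := by
    intro y hy
    refine exists_bbox hF.isOpen_compl y ?_
    intro hyF
    have : y ∈ tailSet n g ∩ F := ⟨hy, hyF⟩
    rw [hKF] at this; exact this
  choose! u hu1 hu2 hu3 using hbox
  obtain ⟨t, htK, htcov⟩ := (isCompact_tailSet n g).elim_nhds_subcover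
    (fun y => bbox (u y))
    (fun y hy => ((isOpen_bbox (hu1 y hy)).mem_nhds (hu2 y hy)))
  refine ⟨fun i => ⋂ y ∈ t, u y i, ?_, ?_, ?_⟩
  · intro i
    exact isOpen_biInter_finset (fun y hy => hu1 y (htK y hy) i)
  · intro i hni
    refine Set.mem_iInter₂.mpr (fun y hy => ?_)
    have : y i = g i := htK y hy i hni
    rw [← this]
    exact hu2 y (htK y hy) i
  · intro h hh ⟨f, hfF, hfh⟩
    -- build z in the tail set
    set z : BoxProd X := fun i => if n ≤ i then g i else f i with hz
    have hzK : z ∈ tailSet n g := fun i hi => by simp only [hz, if_pos hi]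
    obtain ⟨y, hyt, hyz⟩ := Set.mem_iUnion₂.mp (htcov hzK)
    have : f ∈ bbox (u y) := by
      intro i
      by_cases hni : n ≤ i
      · have h1 : h i ∈ ⋂ y ∈ t, u y i := hh i hni
        have h2 := Set.mem_iInter₂.mp h1 y hyt
        rwa [← hfh i hni] at h2
      · have := hyz i
        simpa only [hz, if_neg hni] using this
    exact (hu3 y (htK y hyt) this) hfF
end Dev3
section Dev4
variable {X : ℕ → Type*} [∀ n, TopologicalSpace (X n)]

lemma isClosed_satSet [∀ n, CompactSpace (X n)] {F : Set (BoxProd X)} (hF : IsClosed F) :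
    IsClosed (satSet F) := by
  classical
  rw [← isOpen_compl_iff]
  rw [isOpen_iff_mem_nhds]
  intro g hg
  have hgN : ∀ n, g ∉ satSetN n F := by
    intro n hn
    exact hg (satSetN_subset n F hn)
  choose T hT1 hT2 hT3 using fun n => tail_separation hF (hgN n)
  set V : ∀ i, Set (X i) := fun i => ⋂ m ∈ Finset.range (i + 1), T m i with hV
  have hVopen : ∀ i, IsOpen (V i) := fun i =>
    isOpen_biInter_finset (fun m _ => hT1 m i)
  have hgV : ∀ i, g i ∈ V i := by
    intro i
    refine Set.mem_iInter₂.mpr (fun m hm => ?_)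
    exact hT2 m i (by simpa using Nat.lt_succ_iff.mp (Finset.mem_range.mp hm))
  refine Filter.mem_of_superset ((isOpen_bbox hVopen).mem_nhds hgV) ?_
  intro h hh
  simp only [Set.mem_compl_iff]
  intro hsat
  rw [satSet_eq_iUnion] at hsat
  obtain ⟨m, hm⟩ := Set.mem_iUnion.mp hsat
  refine hT3 m h (fun i hi => ?_) hm
  have := hh i
  exact Set.mem_iInter₂.mp this m (Finset.mem_range.mpr (by omega))

/-- the quotient map. -/
def qmap : BoxProd X → NablaProd X := fun f => Quotient.mk (nablaSetoid X) f

lemma qmap_preimage_image (F : Set (BoxProd X)) : qmap ⁻¹' (qmap '' F) = satSet F := by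
  ext g
  simp only [Set.mem_preimage, Set.mem_image, satSet, Set.mem_setOf_eq]
  constructor
  · rintro ⟨f, hf, hq⟩
    exact ⟨f, hf, Quotient.exact hq⟩
  · rintro ⟨f, hf, hfin⟩
    exact ⟨f, hf, Quotient.sound hfin⟩

lemma isOpen_nabla_iff {s : Set (NablaProd X)} : IsOpen s ↔ IsOpen (qmap ⁻¹' s) :=
  isOpen_coinduced

lemma isClosed_nabla_iff {s : Set (NablaProd X)} : IsClosed s ↔ IsClosed (qmap ⁻¹' s) := by
  rw [← isOpen_compl_iff, ← isOpen_compl_iff (s := qmap ⁻¹' s), isOpen_nabla_iff,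
    Set.preimage_compl]

lemma qmap_closedMap [∀ n, CompactSpace (X n)] {F : Set (BoxProd X)} (hF : IsClosed F) :
    IsClosed (qmap '' F) := by
  rw [isClosed_nabla_iff, qmap_preimage_image]
  exact isClosed_satSet hF

lemma qmap_preimage_singleton [∀ n, T2Space (X n)] [∀ n, CompactSpace (X n)] (e : NablaProd X) :
    qmap ⁻¹' {e} = satSet {(Quotient.out e : BoxProd X)} := by
  have : ({e} : Set (NablaProd X)) = qmap '' {Quotient.out e} := by
    rw [show qmap '' {Quotient.out e} = {qmap (Quotient.out e)} from Set.image_singleton]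
    exact congrArg (fun x : NablaProd X => ({x} : Set (NablaProd X))) (Quotient.out_eq (s := nablaSetoid X) e).symm
  rw [this, qmap_preimage_image]; rfl

lemma fiber_eq_iUnion_tailSet (e : NablaProd X) :
    qmap ⁻¹' {e} = ⋃ n, tailSet n (Quotient.out e) := by
  ext g
  simp only [Set.mem_preimage, Set.mem_singleton_iff, Set.mem_iUnion]
  constructor
  · intro hq
    have hx : (nablaSetoid X).r (Quotient.out e) g := by
      have h2 : Quotient.mk (nablaSetoid X) (Quotient.out e) = Quotient.mk (nablaSetoid X) g := by
        exact (Quotient.out_eq (s := nablaSetoid X) e).trans hq.symm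
      exact Quotient.exact h2
    obtain ⟨n, hn⟩ := hx.bddAbove
    refine ⟨n + 1, fun i hi => ?_⟩
    by_contra hc
    have : i ∈ {k | (Quotient.out e) k ≠ g k} := fun hh => hc hh.symm
    have := hn this
    omega
  · rintro ⟨n, hn⟩
    have : (nablaSetoid X).r g (Quotient.out e) := by
      refine (Set.finite_Iio n).subset ?_
      intro i hi
      simp only [Set.mem_setOf_eq] at hi
      by_contra hc
      exact hi (hn i (le_of_not_gt hc))
    calc qmap g = qmap (Quotient.out e) := Quotient.sound this
    _ = e := Quotient.out_eq e

lemma isClosed_fiber [∀ n, T2Space (X n)] [∀ n, CompactSpace (X n)] (e : NablaProd X) :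
    IsClosed (qmap ⁻¹' {e} : Set (BoxProd X)) := by
  rw [qmap_preimage_singleton]
  exact isClosed_satSet isClosed_singleton

end Dev4
section Dev5
variable {α : Type*} [TopologicalSpace α]

/-- Kernel for a σ-compact set: a subset covering it by `U`-images, with locally finite trace. -/
lemma sigma_kernel (U : α → Set α) (hU : IsNeighbornet U) (K : ℕ → Set α)
    (hK : ∀ n, IsCompact (K n)) :
    ∃ C : Set α, C ⊆ (⋃ n, K n) ∧ (⋃ n, K n) ⊆ (⋃ c ∈ C, U c) ∧
      ∀ y ∈ ⋃ n, K n, ∃ N : Set α, IsOpen N ∧ y ∈ N ∧ (N ∩ C).Finite := by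
  classical
  have hUnhds : ∀ (S : Set α), ∀ x ∈ S, U x ∈ nhds x :=
    fun S x _ => (hU x).1.mem_nhds (hU x).2
  -- pick a finite subcover of any compact set
  let pickF : Set α → Finset α := fun S =>
    if h : IsCompact S then (h.elim_nhds_subcover U (hUnhds S)).choose else ∅
  have pick_spec : ∀ S : Set α, IsCompact S →
      (∀ x ∈ pickF S, x ∈ S) ∧ S ⊆ ⋃ x ∈ pickF S, U x := by
    intro S hS
    have := (hS.elim_nhds_subcover U (hUnhds S)).choose_spec
    simpa only [pickF, dif_pos hS] using this
  -- the recursion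
  let A : ℕ → Set α := fun n => Nat.rec ∅
    (fun m Am => Am ∪ ⋃ x ∈ pickF (K m \ Am), U x) n
  have hAsucc : ∀ n, A (n + 1) = A n ∪ ⋃ x ∈ pickF (K n \ A n), U x := fun n => rfl
  have hAopen : ∀ n, IsOpen (A n) := by
    intro n
    induction n with
    | zero => exact isOpen_empty
    | succ m ih =>
      rw [hAsucc]
      exact ih.union (isOpen_biUnion (fun x _ => (hU x).1))
  have hAmono : ∀ m n, m ≤ n → A m ⊆ A n := by
    intro m n hmn
    induction n with
    | zero => simp_all
    | succ k ih =>
      rcases Nat.lt_or_ge m (k+1) with h | h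
      · rw [hAsucc]
        exact (ih (by omega)).trans Set.subset_union_left
      · have : m = k + 1 := by omega
        subst this; exact subset_rfl
  set F : ℕ → Finset α := fun n => pickF (K n \ A n) with hF
  have hcomp : ∀ n, IsCompact (K n \ A n) := fun n => (hK n).diff (hAopen n)
  have hFspec : ∀ n, (∀ x ∈ F n, x ∈ K n \ A n) ∧ K n \ A n ⊆ ⋃ x ∈ F n, U x :=
    fun n => pick_spec _ (hcomp n)
  have hKsub : ∀ n, K n ⊆ A (n + 1) := by
    intro n y hy
    rw [hAsucc]
    rcases Classical.em (y ∈ A n) with h | h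
    · exact Or.inl h
    · exact Or.inr ((hFspec n).2 ⟨hy, h⟩)
  set C : Set α := ⋃ n, (F n : Set α) with hC
  have hCsub : C ⊆ ⋃ n, K n := by
    rintro x hx
    obtain ⟨n, hn⟩ := Set.mem_iUnion.mp hx
    exact Set.mem_iUnion.mpr ⟨n, ((hFspec n).1 x hn).1⟩
  have hAcov : ∀ n, A n ⊆ ⋃ c ∈ C, U c := by
    intro n
    induction n with
    | zero => simp [A]
    | succ m ih =>
      rw [hAsucc]
      rintro y (hy | hy)
      · exact ih hy
      · obtain ⟨x, hx, hyx⟩ := Set.mem_iUnion₂.mp hy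
        exact Set.mem_iUnion₂.mpr ⟨x, Set.mem_iUnion.mpr ⟨m, hx⟩, hyx⟩
  have hUF_sub : ∀ m, (⋃ x ∈ F m, U x) ⊆ A (m + 1) := by
    intro m
    rw [hAsucc]
    exact Set.subset_union_right
  refine ⟨C, hCsub, ?_, ?_⟩
  · intro y hy
    obtain ⟨n, hn⟩ := Set.mem_iUnion.mp hy
    exact hAcov (n+1) (hKsub n hn)
  · intro y hy
    obtain ⟨n, hn⟩ := Set.mem_iUnion.mp hy
    have hyA : y ∈ A (n + 1) := hKsub n hn
    -- find the stage where y got covered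
    have : ∃ m, ∃ d ∈ F m, y ∈ U d := by
      have : ∀ k, y ∈ A k → ∃ m, ∃ d ∈ F m, y ∈ U d := by
        intro k
        induction k with
        | zero => intro h; simp [A] at h
        | succ j ih =>
          intro h
          rw [hAsucc] at h
          rcases h with h | h
          · exact ih h
          · obtain ⟨d, hd, hyd⟩ := Set.mem_iUnion₂.mp h
            exact ⟨j, d, hd, hyd⟩
      exact this (n+1) hyA
    obtain ⟨m, d, hd, hyd⟩ := this
    refine ⟨U d, (hU d).1, hyd, ?_⟩
    have : U d ∩ C ⊆ ⋃ k ∈ Finset.range (m + 1), (F k : Set α) := by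
      rintro x ⟨hxU, hxC⟩
      obtain ⟨k, hk⟩ := Set.mem_iUnion.mp hxC
      rcases Nat.lt_or_ge k (m + 1) with h | h
      · exact Set.mem_iUnion₂.mpr ⟨k, Finset.mem_range.mpr h, hk⟩
      · exfalso
        have hxA : x ∈ A k := by
          have h1 : U d ⊆ A (m + 1) := fun z hz =>
            hUF_sub m (Set.mem_iUnion₂.mpr ⟨d, hd, hz⟩)
          exact hAmono (m+1) k h (h1 hxU)
        exact ((hFspec k).1 x hk).2 hxA
    exact Set.Finite.subset (Set.Finite.biUnion (Finset.finite_toSet _)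
      (fun k _ => Finset.finite_toSet _)) this

/-- From isolation data to discrete subspace topology. -/
lemma discrete_of_isolated {C : Set α} (h : ∀ c ∈ C, ∃ N : Set α, IsOpen N ∧ N ∩ C = {c}) :
    DiscreteTopology C := by
  rw [discreteTopology_iff_isOpen_singleton]
  intro x
  obtain ⟨c, hc⟩ := x
  obtain ⟨N, hN, hNC⟩ := h c hc
  have : {(⟨c, hc⟩ : C)} = (Subtype.val) ⁻¹' N := by
    ext ⟨y, hy⟩
    simp only [Set.mem_singleton_iff, Set.mem_preimage, Subtype.mk.injEq]
    constructor
    · intro he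
      subst he
      have : y ∈ N ∩ C := by rw [hNC]; exact rfl
      exact this.1
    · intro hyN
      have : y ∈ N ∩ C := ⟨hyN, hy⟩
      rw [hNC] at this
      exact this
  rw [this]
  exact hN.preimage continuous_subtype_val

/-- From discrete subspace topology to isolation data. -/
lemma isolated_of_discrete {C : Set α} (h : DiscreteTopology C) :
    ∀ c ∈ C, ∃ N : Set α, IsOpen N ∧ N ∩ C = {c} := by
  intro c hc
  have : IsOpen ({⟨c, hc⟩} : Set C) := isOpen_discrete _
  obtain ⟨N, hN, hNpre⟩ := isOpen_induced_iff.mp this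
  refine ⟨N, hN, ?_⟩
  ext y
  simp only [Set.mem_inter_iff, Set.mem_singleton_iff]
  constructor
  · rintro ⟨hyN, hyC⟩
    have : (⟨y, hyC⟩ : C) ∈ Subtype.val ⁻¹' N := hyN
    rw [hNpre] at this
    exact congrArg Subtype.val this
  · intro hyc
    subst hyc
    have : (⟨y, hc⟩ : C) ∈ ({⟨y, hc⟩} : Set C) := rfl
    rw [← hNpre] at this
    exact ⟨this, hc⟩

/-- Subsets of closed discrete sets are closed. -/
lemma closed_of_subset_closed_discrete {D A : Set α} (hD : IsClosed D)
    (hdisc : DiscreteTopology D) (hAD : A ⊆ D) : IsClosed A := by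
  rw [← closure_subset_iff_isClosed]
  intro x hx
  have hxD : x ∈ D := (closure_minimal hAD hD) hx
  obtain ⟨N, hN, hNC⟩ := isolated_of_discrete hdisc x hxD
  have hxN : x ∈ N := by
    have : x ∈ N ∩ D := hNC ▸ rfl
    exact this.1
  obtain ⟨a, haA, haN⟩ : (A ∩ N).Nonempty := by
    rw [Set.inter_comm]
    exact mem_closure_iff.mp hx N hN hxN |>.imp (fun a h => h)
  have : a ∈ N ∩ D := ⟨haN, hAD haA⟩
  rw [hNC] at this
  rw [← this]
  exact haA
end Dev5
section Dev6
variable {X : ℕ → Type*} [∀ n, TopologicalSpace (X n)]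
  [∀ n, CompactSpace (X n)] [∀ n, T2Space (X n)]

theorem dirA (hD : IsDSpace (BoxProd X)) : IsDSpace (NablaProd X) := by
  intro V hV
  set U : BoxProd X → Set (BoxProd X) := fun f => qmap ⁻¹' (V (qmap f)) with hUdef
  have hU : IsNeighbornet U := by
    intro f
    exact ⟨isOpen_nabla_iff.mp (hV (qmap f)).1, (hV (qmap f)).2⟩
  obtain ⟨D, hDcl, hDdisc, hDcov⟩ := hD U hU
  refine ⟨qmap '' D, qmap_closedMap hDcl, ?_, ?_⟩
  · refine discrete_of_isolated ?_
    rintro e ⟨d, hd, rfl⟩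
    set C : Set (BoxProd X) := {x ∈ D | qmap x ≠ qmap d} with hCdef
    have hCcl : IsClosed C :=
      closed_of_subset_closed_discrete hDcl hDdisc (fun x hx => hx.1)
    refine ⟨(qmap '' C)ᶜ, (qmap_closedMap hCcl).isOpen_compl, ?_⟩
    ext y
    simp only [Set.mem_inter_iff, Set.mem_compl_iff, Set.mem_singleton_iff]
    constructor
    · rintro ⟨hyn, d', hd', rfl⟩
      by_contra hne
      exact hyn ⟨d', ⟨hd', hne⟩, rfl⟩
    · rintro rfl
      refine ⟨?_, d, hd, rfl⟩
      rintro ⟨x, ⟨hxD, hxne⟩, hxq⟩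
      exact hxne hxq
  · rw [Set.eq_univ_iff_forall]
    intro ξ
    have hg : qmap (Quotient.out ξ) = ξ := Quotient.out_eq ξ
    have : Quotient.out ξ ∈ ⋃ x ∈ D, U x := by
      rw [hDcov]; trivial
    obtain ⟨d, hd, hgd⟩ := Set.mem_iUnion₂.mp this
    refine Set.mem_iUnion₂.mpr ⟨qmap d, ⟨d, hd, rfl⟩, ?_⟩
    have : qmap (Quotient.out ξ) ∈ V (qmap d) := hgd
    rwa [hg] at this

theorem dirB (hD : IsDSpace (NablaProd X)) : IsDSpace (BoxProd X) := by
  intro U hU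
  classical
  choose C hC1 hC2 hC3 using fun e : NablaProd X =>
    sigma_kernel U hU (fun n => tailSet n (Quotient.out e))
      (fun n => isCompact_tailSet n (Quotient.out e))
  have hfib : ∀ e : NablaProd X, qmap ⁻¹' {e} = ⋃ n, tailSet n (Quotient.out e) :=
    fiber_eq_iUnion_tailSet
  set W : NablaProd X → Set (BoxProd X) := fun e => ⋃ c ∈ C e, U c with hWdef
  have hWopen : ∀ e, IsOpen (W e) := fun e => isOpen_biUnion (fun c _ => (hU c).1)
  have hfibW : ∀ e, qmap ⁻¹' {e} ⊆ W e := by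
    intro e
    rw [hfib e]
    exact hC2 e
  set V : NablaProd X → Set (NablaProd X) := fun e => (qmap '' (W e)ᶜ)ᶜ with hVdef
  have hV : IsNeighbornet V := by
    intro e
    refine ⟨(qmap_closedMap (hWopen e).isClosed_compl).isOpen_compl, ?_⟩
    rintro ⟨h, hhW, hhq⟩
    exact hhW (hfibW e hhq)
  obtain ⟨E, hEcl, hEdisc, hEcov⟩ := hD V hV
  set D : Set (BoxProd X) := ⋃ e ∈ E, C e with hDdef
  have hCfib : ∀ e, C e ⊆ qmap ⁻¹' {e} := by
    intro e
    rw [hfib e]; exact hC1 e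
  have hDZ : D ⊆ qmap ⁻¹' E := by
    rintro x hx
    obtain ⟨e, he, hxe⟩ := Set.mem_iUnion₂.mp hx
    have : qmap x = e := hCfib e hxe
    simp only [Set.mem_preimage, this]
    exact he
  have hZcl : IsClosed (qmap ⁻¹' E : Set (BoxProd X)) := isClosed_nabla_iff.mp hEcl
  -- the key local identification of D near a fiber
  have hDN : ∀ e ∈ E, ∀ O : Set (NablaProd X), IsOpen O → O ∩ E = {e} →
      D ∩ qmap ⁻¹' O = C e := by
    intro e he O hO hOE
    ext x
    simp only [Set.mem_inter_iff, Set.mem_preimage]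
    constructor
    · rintro ⟨hxD, hxO⟩
      obtain ⟨e', he', hxe'⟩ := Set.mem_iUnion₂.mp hxD
      have hq : qmap x = e' := hCfib e' hxe'
      have : e' ∈ O ∩ E := ⟨hq ▸ hxO, he'⟩
      rw [hOE] at this
      rwa [this] at hxe'
    · intro hx
      have hq : qmap x = e := hCfib e hx
      refine ⟨Set.mem_iUnion₂.mpr ⟨e, he, hx⟩, ?_⟩
      rw [hq]
      have : e ∈ O ∩ E := by rw [hOE]; rfl
      exact this.1
  -- closure of each C e stays in C e
  have hCcl : ∀ e, closure (C e) ⊆ C e := by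
    intro e y hy
    have hyfib : y ∈ qmap ⁻¹' {e} :=
      (closure_minimal (hCfib e) (isClosed_fiber e)) hy
    have hyY : y ∈ ⋃ n, tailSet n (Quotient.out e) := by rwa [hfib e] at hyfib
    obtain ⟨N, hNopen, hyN, hNfin⟩ := hC3 e y hyY
    have h1 : y ∈ closure (N ∩ C e) := hNopen.inter_closure ⟨hyN, hy⟩
    have h2 : IsClosed (N ∩ C e) := hNfin.isClosed
    have := h2.closure_subset h1
    exact this.2
  refine ⟨D, ?_, ?_, ?_⟩
  · -- closed
    rw [← closure_subset_iff_isClosed]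
    intro x hx
    have hxZ : x ∈ qmap ⁻¹' E := (closure_minimal hDZ hZcl) hx
    have he : qmap x ∈ E := hxZ
    obtain ⟨O, hO, hOE⟩ := isolated_of_discrete hEdisc (qmap x) he
    have hxO : x ∈ qmap ⁻¹' O := by
      have : qmap x ∈ O ∩ E := by rw [hOE]; rfl
      exact this.1
    have h1 : x ∈ closure (qmap ⁻¹' O ∩ D) :=
      (isOpen_nabla_iff.mp hO).inter_closure ⟨hxO, hx⟩
    rw [Set.inter_comm, hDN (qmap x) he O hO hOE] at h1
    have := hCcl (qmap x) h1
    exact Set.mem_iUnion₂.mpr ⟨qmap x, he, this⟩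
  · -- discrete
    refine discrete_of_isolated ?_
    intro d hd
    obtain ⟨e, he, hde⟩ := Set.mem_iUnion₂.mp hd
    have hq : qmap d = e := hCfib e hde
    obtain ⟨O, hO, hOE⟩ := isolated_of_discrete hEdisc e he
    have hdfib : d ∈ ⋃ n, tailSet n (Quotient.out e) := by
      rw [← hfib e]; exact hCfib e hde
    obtain ⟨N2, hN2open, hdN2, hN2fin⟩ := hC3 e d hdfib
    set S : Set (BoxProd X) := (N2 ∩ C e) \ {d} with hSdef
    have hSfin : S.Finite := (hN2fin.subset (by
      intro z hz
      exact ⟨hz.1.1, hz.1.2⟩)).subset (fun z hz => hz)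
    have hScl : IsClosed S := hSfin.isClosed
    refine ⟨(qmap ⁻¹' O ∩ N2) ∩ Sᶜ, ((isOpen_nabla_iff.mp hO).inter hN2open).inter
      hScl.isOpen_compl, ?_⟩
    ext x
    simp only [Set.mem_inter_iff, Set.mem_singleton_iff, Set.mem_compl_iff]
    constructor
    · rintro ⟨⟨⟨hxO, hxN2⟩, hxS⟩, hxD⟩
      have : x ∈ D ∩ qmap ⁻¹' O := ⟨hxD, hxO⟩
      rw [hDN e he O hO hOE] at this
      by_contra hne
      exact hxS ⟨⟨hxN2, this⟩, hne⟩
    · intro hxd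
      rw [hxd]
      have hdO : d ∈ qmap ⁻¹' O := by
        simp only [Set.mem_preimage, hq]
        have : e ∈ O ∩ E := by rw [hOE]; rfl
        exact this.1
      exact ⟨⟨⟨hdO, hdN2⟩, fun hS => hS.2 rfl⟩, Set.mem_iUnion₂.mpr ⟨e, he, hde⟩⟩
  · -- cover
    rw [Set.eq_univ_iff_forall]
    intro g
    have : qmap g ∈ ⋃ e ∈ E, V e := by rw [hEcov]; trivial
    obtain ⟨e, he, hge⟩ := Set.mem_iUnion₂.mp this
    have hgW : g ∈ W e := by
      by_contra hgW
      exact hge ⟨g, hgW, rfl⟩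
    obtain ⟨c, hc, hgc⟩ := Set.mem_iUnion₂.mp hgW
    exact Set.mem_iUnion₂.mpr ⟨c, Set.mem_iUnion₂.mpr ⟨e, he, hc⟩, hgc⟩

end Dev6

/-- For compact Hausdorff spaces `X n`, the box product is a D-space iff
the nabla product is a D-space. -/
theorem boxProd_isDSpace_iff_nablaProd_isDSpace (X : ℕ → Type*)
    [∀ n, TopologicalSpace (X n)] [∀ n, CompactSpace (X n)] [∀ n, T2Space (X n)] :
    IsDSpace (BoxProd X) ↔ IsDSpace (NablaProd X) := ⟨dirA, dirB⟩
end

section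
/- Let T be a neighbornet on a topological space X, let U be a neighbornet on X below T, let D ⊆ X be U-sticky, and let E ⊆ X be super-sticky below T. Then D' = D ∪ (E \ U(D)) is U-sticky; moreover D ⊆ D' and (D' \ D) ∩ U(D) = ∅. -/
open TopologicalSpace Set Cardinal

universe u v

/-- Auxiliary: a set is discrete if each of its points is isolated by an open set. -/
theorem discrete_of_isolated' {X : Type*} [TopologicalSpace X] {S : Set X}
    (h : ∀ x ∈ S, ∃ V : Set X, IsOpen V ∧ x ∈ V ∧ V ∩ S ⊆ {x}) :
    DiscreteTopology S := by
  rw [discreteTopology_subtype_iff]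
  intro x hx
  obtain ⟨V, hVo, hxV, hVS⟩ := h x hx
  rw [← Filter.empty_mem_iff_bot]
  refine Filter.mem_inf_of_inter
    (Filter.inter_mem (mem_nhdsWithin_of_mem_nhds (hVo.mem_nhds hxV)) self_mem_nhdsWithin)
    (Filter.mem_principal_self S) ?_
  rintro y ⟨⟨hyV, hyx⟩, hyS⟩
  exact hyx (hVS ⟨hyV, hyS⟩)

/-- Auxiliary: points of a discrete subset are isolated by open sets of the ambient space. -/
theorem isolated_of_discrete' {X : Type*} [TopologicalSpace X] {S : Set X}
    (h : DiscreteTopology S) {x : X} (hx : x ∈ S) :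
    ∃ V : Set X, IsOpen V ∧ x ∈ V ∧ V ∩ S ⊆ {x} := by
  have h1 : IsOpen ({⟨x, hx⟩} : Set S) := isOpen_discrete _
  rw [isOpen_induced_iff] at h1
  obtain ⟨V, hVo, hV⟩ := h1
  refine ⟨V, hVo, ?_, ?_⟩
  · have : (⟨x, hx⟩ : S) ∈ ((↑) ⁻¹' V : Set S) := by rw [hV]; rfl
    exact this
  · rintro y ⟨hyV, hyS⟩
    have : (⟨y, hyS⟩ : S) ∈ ((↑) ⁻¹' V : Set S) := hyV
    rw [hV] at this
    exact congrArg Subtype.val this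

/-- Growing a `U`-sticky set by a super-sticky set. -/
theorem uSticky_union_superSticky_diff {X : Type*} [TopologicalSpace X]
    (T U : X → Set X) (hT : IsNeighbornet T) (hU : IsNeighbornet U)
    (hbelow : IsBelow U T) (D : Set X) (hD : USticky U D)
    (E : Set X) (hE : SuperSticky T E) :
    USticky U (D ∪ (E \ ⋃ d ∈ D, U d)) ∧
      D ⊆ D ∪ (E \ ⋃ d ∈ D, U d) ∧
      ((D ∪ (E \ ⋃ d ∈ D, U d)) \ D) ∩ (⋃ d ∈ D, U d) = ∅ := by
  obtain ⟨hDc, hDd, hDs⟩ := hD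
  obtain ⟨hEc, hEd, hEs⟩ := hE
  set UD : Set X := ⋃ d ∈ D, U d with hUD
  have hUDopen : IsOpen UD := isOpen_biUnion fun d _ => (hU d).1
  have hsubUD : ∀ d ∈ D, U d ⊆ UD := fun d hd x hx => mem_biUnion hd hx
  set D' : Set X := D ∪ (E \ UD) with hD'
  refine ⟨⟨?_, ?_, ?_⟩, subset_union_left, ?_⟩
  · exact hDc.union (hEc.sdiff hUDopen)
  · -- discreteness
    refine discrete_of_isolated' fun x hx => ?_
    rcases hx with hxD | ⟨hxE, hxUD⟩
    · obtain ⟨V, hVo, hxV, hVD⟩ := isolated_of_discrete' hDd hxD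
      refine ⟨V ∩ U x, hVo.inter (hU x).1, ⟨hxV, (hU x).2⟩, ?_⟩
      rintro y ⟨⟨hyV, hyU⟩, hyD' | ⟨_, hyUD⟩⟩
      · exact hVD ⟨hyV, hyD'⟩
      · exact absurd (hsubUD x hxD hyU) hyUD
    · obtain ⟨V, hVo, hxV, hVE⟩ := isolated_of_discrete' hEd hxE
      have hxD : x ∉ D := fun h => hxUD (hsubUD x h (hU x).2)
      refine ⟨V ∩ Dᶜ, hVo.inter hDc.isOpen_compl, ⟨hxV, hxD⟩, ?_⟩
      rintro y ⟨⟨hyV, hyD⟩, hyD' | ⟨hyE, _⟩⟩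
      · exact absurd hyD' hyD
      · exact hVE ⟨hyV, hyE⟩
  · -- stickiness
    intro x ⟨y, hyU, hyD'⟩
    have hUD'sub : UD ⊆ ⋃ d ∈ D', U d := by
      refine biUnion_subset_biUnion_left subset_union_left
    by_cases hxUD : x ∈ UD
    · exact hUD'sub hxUD
    · rcases hyD' with hyD | ⟨hyE, _⟩
      · exact absurd (hDs x ⟨y, hyU, hyD⟩) hxUD
      · -- use super-stickiness with modified neighbornet W
        classical
        set W : X → Set X := fun z => if z ∈ UD then U z ∩ UD else U z with hW
        have hWnet : IsNeighbornet W := by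
          intro z
          by_cases hz : z ∈ UD <;> simp only [hW, hz, if_true, if_false]
          · exact ⟨((hU z).1).inter hUDopen, (hU z).2, hz⟩
          · exact hU z
        have hWbelow : IsBelow W T := by
          intro z
          by_cases hz : z ∈ UD <;> simp only [hW, hz, if_true, if_false]
          · exact (inter_subset_left).trans ((hbelow z))
          · exact hbelow z
        have hxW : W x = U x := by simp only [hW, hxUD, if_false]
        have hxE : x ∈ E := by
          refine hEs W hWnet hWbelow x ⟨y, ?_, hyE⟩
          rw [hxW]; exact hyU
        have : x ∈ D' := Or.inr ⟨hxE, hxUD⟩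
        exact mem_biUnion this (hU x).2
  · -- D' \ D avoids U(D)
    ext z
    simp only [mem_inter_iff, mem_diff, mem_union, mem_empty_iff_false, iff_false]
    rintro ⟨⟨hz1, hz2⟩, hz3⟩
    rcases hz1 with h | ⟨_, h⟩
    · exact hz2 h
    · exact h hz3
end

section
/- Let X be a topological space with a topological partial order ⪯. (1) If for every x ∈ X the up-set ↑x, with the subspace topology, is a D-space, then X is a D-space. (2) If for every x ∈ X the up-set ↑x, with the subspace topology, is hereditarily D, then X is hereditarily D. -/
open TopologicalSpace Set Cardinal

universe u v

section Aux
open scoped Classical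

lemma myDiscrete_iff {X : Type*} [TopologicalSpace X] {A : Set X} :
    DiscreteTopology A ↔ ∀ x ∈ A, ∃ V : Set X, IsOpen V ∧ V ∩ A = {x} := by
  constructor
  · intro h x hx
    have hopen : IsOpen ({⟨x, hx⟩} : Set A) := isOpen_discrete _
    rw [isOpen_induced_iff] at hopen
    obtain ⟨V, hV, hVe⟩ := hopen
    refine ⟨V, hV, ?_⟩
    apply Subset.antisymm
    · rintro y ⟨hyV, hyA⟩
      have : (⟨y, hyA⟩ : A) ∈ Subtype.val ⁻¹' V := hyV
      rw [hVe] at this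
      simpa using congrArg Subtype.val this
    · rintro y rfl
      have : (⟨y, hx⟩ : A) ∈ ({⟨y, hx⟩} : Set A) := rfl
      rw [← hVe] at this
      exact ⟨this, hx⟩
  · intro h
    rw [discreteTopology_iff_isOpen_singleton]
    rintro ⟨x, hx⟩
    obtain ⟨V, hV, hVe⟩ := h x hx
    have : ({⟨x, hx⟩} : Set A) = Subtype.val ⁻¹' V := by
      ext a
      simp only [mem_singleton_iff, mem_preimage, Subtype.ext_iff]
      constructor
      · intro he
        have hx' : x ∈ V ∩ A := by rw [hVe]; rfl
        rw [he]; exact hx'.1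
      · intro ha
        have : (a : X) ∈ V ∩ A := ⟨ha, a.2⟩
        rw [hVe] at this; exact this
    rw [this]
    exact hV.preimage continuous_subtype_val

lemma Lmain {X : Type*} [TopologicalSpace X] {A Z : Set X} (hA : IsDSpace A)
    (hZA : Z ⊆ A) (hZc : IsClosed Z) (U : X → Set X)
    (hUo : ∀ x, IsOpen (U x)) (hUm : ∀ x, x ∈ U x) :
    ∃ E : Set X, E ⊆ Z ∧ IsClosed E ∧ DiscreteTopology E ∧ Z ⊆ ⋃ d ∈ E, U d := by
  set V : A → Set A := fun a =>
    if (a : X) ∈ Z then Subtype.val ⁻¹' (U a) else Subtype.val ⁻¹' Zᶜ with hVdef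
  have hV : IsNeighbornet V := by
    intro a
    constructor
    · simp only [hVdef]
      split_ifs
      · exact (hUo _).preimage continuous_subtype_val
      · exact (hZc.isOpen_compl).preimage continuous_subtype_val
    · simp only [hVdef]
      split_ifs with h
      · exact hUm _
      · exact h
  obtain ⟨D₀, hD₀c, hD₀d, hD₀cov⟩ := hA V hV
  set D₁ : Set A := D₀ ∩ (Subtype.val ⁻¹' Z) with hD₁def
  have hD₁c : IsClosed D₁ := hD₀c.inter (hZc.preimage continuous_subtype_val)
  refine ⟨Subtype.val '' D₁, ?_, ?_, ?_, ?_⟩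
  · rintro x ⟨a, ha, rfl⟩
    exact ha.2
  · apply isClosed_of_closure_subset
    intro x hx
    have hxZ : x ∈ Z := by
      have := closure_mono (show Subtype.val '' D₁ ⊆ Z by rintro y ⟨a, ha, rfl⟩; exact ha.2)
      exact hZc.closure_subset (this hx)
    have hxA : x ∈ A := hZA hxZ
    have : (⟨x, hxA⟩ : A) ∈ closure D₁ := closure_subtype.2 hx
    rw [hD₁c.closure_eq] at this
    exact ⟨⟨x, hxA⟩, this, rfl⟩
  · rw [myDiscrete_iff]
    rintro x ⟨a, ha, rfl⟩
    obtain ⟨V₁, hV₁o, hV₁e⟩ := (myDiscrete_iff.1 hD₀d) a ha.1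
    rw [isOpen_induced_iff] at hV₁o
    obtain ⟨W, hWo, hWe⟩ := hV₁o
    refine ⟨W, hWo, ?_⟩
    apply Subset.antisymm
    · rintro y ⟨hyW, b, hb, rfl⟩
      have hbV₁ : b ∈ V₁ := by rw [← hWe]; exact hyW
      have : b ∈ V₁ ∩ D₀ := ⟨hbV₁, hb.1⟩
      rw [hV₁e] at this
      simp only [mem_singleton_iff] at this ⊢
      rw [this]
    · rintro y rfl
      have haV₁ : a ∈ V₁ ∩ D₀ := by rw [hV₁e]; rfl
      have : a ∈ Subtype.val ⁻¹' W := by rw [hWe]; exact haV₁.1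
      exact ⟨this, a, ha, rfl⟩
  · intro z hz
    have : (⟨z, hZA hz⟩ : A) ∈ ⋃ d ∈ D₀, V d := by rw [hD₀cov]; trivial
    simp only [mem_iUnion] at this
    obtain ⟨d, hd, hzd⟩ := this
    by_cases hdZ : (d : X) ∈ Z
    · have : z ∈ U d := by
        simp only [hVdef, if_pos hdZ] at hzd; exact hzd
      simp only [mem_iUnion]
      exact ⟨d, ⟨d, ⟨hd, hdZ⟩, rfl⟩, this⟩
    · exfalso
      simp only [hVdef, if_neg hdZ] at hzd
      exact hzd hz

lemma part1 {X : Type*} [TopologicalSpace X] [PartialOrder X]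
    (htop : ∀ x : X, {y | y ≤ x} ∈ nhds x)
    (hD : ∀ x : X, IsDSpace ({y | x ≤ y} : Set X)) : IsDSpace X := by
  have hdown : ∀ x : X, IsOpen {y : X | y ≤ x} := by
    intro x
    rw [isOpen_iff_mem_nhds]
    intro y hy
    exact Filter.mem_of_superset (htop y) (fun z hz => le_trans hz hy)
  have hup : ∀ x : X, IsClosed {y : X | x ≤ y} := by
    intro x
    rw [← isOpen_compl_iff, isOpen_iff_mem_nhds]
    intro y hy
    exact Filter.mem_of_superset (htop y) (fun z hz hc => hy (le_trans hc hz))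
  intro U0 hU0
  set U : X → Set X := fun x => U0 x ∩ {y | y ≤ x} with hUdef
  have hUo : ∀ x, IsOpen (U x) := fun x => (hU0 x).1.inter (hdown x)
  have hUm : ∀ x, x ∈ U x := fun x => ⟨(hU0 x).2, le_refl x⟩
  have hUsub : ∀ x, ∀ y ∈ U x, y ≤ x := fun x y hy => hy.2
  let r := (WellOrderingRel : X → X → Prop)
  have hwo : IsWellOrder X r := WellOrderingRel.isWellOrder
  have wf : WellFounded r := hwo.wf
  have key : ∀ (x : X) (Z : Set X), IsClosed Z → Z ⊆ {y | x ≤ y} →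
      ∃ E : Set X, E ⊆ Z ∧ IsClosed E ∧ DiscreteTopology E ∧ Z ⊆ ⋃ d ∈ E, U d :=
    fun x Z hc hs => Lmain (hD x) hs hc U hUo hUm
  obtain ⟨F, Glt, hGlteq, hF⟩ : ∃ F Glt : X → Set X,
      (∀ x : X, Glt x = ⋃ y, ⋃ (_ : r y x), ⋃ d ∈ F y, U d) ∧
      (∀ x : X, (x ∈ Glt x → F x = ∅) ∧
        (x ∉ Glt x → F x ⊆ (Glt x)ᶜ ∩ {y | x ≤ y} ∧ IsClosed (F x) ∧
          DiscreteTopology (F x) ∧ (Glt x)ᶜ ∩ {y | x ≤ y} ⊆ ⋃ d ∈ F x, U d)) := by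
    have hopen : ∀ (x : X) (ih : ∀ y, r y x → Set X),
        IsOpen (⋃ y, ⋃ (h : r y x), ⋃ d ∈ ih y h, U d) :=
      fun x ih => isOpen_iUnion fun y => isOpen_iUnion fun h =>
        isOpen_biUnion fun d _ => hUo d
    set body : ∀ x : X, (∀ y, r y x → Set X) → Set X := fun x ih =>
      if hx : x ∈ ⋃ y, ⋃ (h : r y x), ⋃ d ∈ ih y h, U d then ∅
      else (key x ((⋃ y, ⋃ (h : r y x), ⋃ d ∈ ih y h, U d)ᶜ ∩ {y | x ≤ y})
        ((hopen x ih).isClosed_compl.inter (hup x)) inter_subset_right).choose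
      with hbody
    refine ⟨wf.fix body, fun x => ⋃ y, ⋃ (_ : r y x), ⋃ d ∈ wf.fix body y, U d,
      fun x => rfl, fun x => ?_⟩
    have hfix : wf.fix body x = body x (fun y _ => wf.fix body y) := wf.fix_eq body x
    beta_reduce
    constructor
    · intro hx
      rw [hfix, hbody]
      exact dif_pos hx
    · intro hx
      have h2 : wf.fix body x = (key x
          ((⋃ y, ⋃ (_ : r y x), ⋃ d ∈ wf.fix body y, U d)ᶜ ∩ {y | x ≤ y})
          ((hopen x (fun y _ => wf.fix body y)).isClosed_compl.inter (hup x))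
          inter_subset_right).choose := by
        rw [hfix]; exact dif_neg hx
      rw [h2]
      exact (key x _
        ((hopen x (fun y _ => wf.fix body y)).isClosed_compl.inter (hup x))
        inter_subset_right).choose_spec
  have hGlto : ∀ x, IsOpen (Glt x) := by
    intro x
    rw [hGlteq]
    exact isOpen_iUnion fun y => isOpen_iUnion fun _ => isOpen_biUnion fun d _ => hUo d
  have hFc : ∀ x, IsClosed (F x) := by
    intro x
    by_cases hx : x ∈ Glt x
    · rw [(hF x).1 hx]; exact isClosed_empty
    · exact ((hF x).2 hx).2.1
  have hFd : ∀ x, DiscreteTopology (F x) := by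
    intro x
    by_cases hx : x ∈ Glt x
    · rw [(hF x).1 hx, myDiscrete_iff]
      intro y hy
      exact absurd hy (notMem_empty y)
    · exact ((hF x).2 hx).2.2.1
  have hFsub : ∀ x, F x ⊆ (Glt x)ᶜ ∩ {y | x ≤ y} := by
    intro x
    by_cases hx : x ∈ Glt x
    · rw [(hF x).1 hx]; exact empty_subset _
    · exact ((hF x).2 hx).1
  have hFup : ∀ x, ∀ d ∈ F x, x ≤ d := fun x d hd => (hFsub x hd).2
  have hmono : ∀ x y, r x y → (⋃ d ∈ F x, U d) ⊆ Glt y := by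
    intro x y hxy z hz
    rw [hGlteq]
    exact mem_iUnion.2 ⟨x, mem_iUnion.2 ⟨hxy, hz⟩⟩
  have hGltmono : ∀ x y, r x y → Glt x ⊆ Glt y := by
    intro x y hxy z hz
    rw [hGlteq] at hz
    obtain ⟨w, hw⟩ := mem_iUnion.1 hz
    obtain ⟨hrwx, hzw⟩ := mem_iUnion.1 hw
    exact hmono w y (haveI := hwo; IsTrans.trans w x y hrwx hxy) hzw
  -- Claim A
  have hA : ∀ m x, x ∉ Glt m → ∀ y, r y m → ∀ d ∈ F y, ¬ d ≤ x := by
    intro m x hxm y hym d hd hdx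
    have hyy : y ∉ Glt y := by
      intro hc
      rw [(hF y).1 hc] at hd
      exact notMem_empty d hd
    have hxGy : x ∉ Glt y := fun hc => hxm (hGltmono y m hym hc)
    have hxup : x ∈ (Glt y)ᶜ ∩ {z | y ≤ z} := ⟨hxGy, le_trans (hFup y d hd) hdx⟩
    have : x ∈ ⋃ d ∈ F y, U d := ((hF y).2 hyy).2.2.2 hxup
    exact hxm (hmono y m hym this)
  -- Claim B
  have hB : ∀ m z, r m z → ∀ d ∈ F z, d ∉ ⋃ e ∈ F m, U e := by
    intro m z hmz d hd hc
    exact (hFsub z hd).1 (hmono m z hmz hc)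
  set D : Set X := ⋃ y, F y with hDdef
  -- separation
  have hsep : ∀ x : X, x ∈ ⋃ d ∈ D, U d →
      ∃ (W : Set X) (m : X), IsOpen W ∧ x ∈ W ∧ W ∩ D ⊆ F m := by
    intro x hx
    have hSne : {y | x ∈ ⋃ d ∈ F y, U d}.Nonempty := by
      simp only [hDdef, mem_iUnion] at hx
      obtain ⟨d, hd, hxd⟩ := hx
      obtain ⟨y, hy⟩ := hd
      exact ⟨y, mem_iUnion.2 ⟨d, mem_iUnion.2 ⟨hy, hxd⟩⟩⟩
    set m := wf.min _ hSne with hm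
    have hmS : x ∈ ⋃ d ∈ F m, U d := wf.min_mem _ hSne
    have hxnot : x ∉ Glt m := by
      intro hc
      rw [hGlteq] at hc
      obtain ⟨y, hy⟩ := mem_iUnion.1 hc
      obtain ⟨hrym, hzy⟩ := mem_iUnion.1 hy
      exact wf.not_lt_min {y | x ∈ ⋃ d ∈ F y, U d} (x := y) hzy hrym
    simp only [mem_iUnion] at hmS
    obtain ⟨d₀, hd₀, hxd₀⟩ := hmS
    refine ⟨{y | y ≤ x} ∩ U d₀, m, (hdown x).inter (hUo d₀), ⟨le_refl x, hxd₀⟩, ?_⟩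
    rintro z ⟨⟨hzx, hzd₀⟩, hzD⟩
    obtain ⟨y, hzy⟩ := mem_iUnion.1 hzD
    rcases (haveI := hwo; trichotomous_of r y m) with hym | hym | hmy
    · exact absurd hzx (hA m x hxnot y hym z hzy)
    · rw [← hym]; exact hzy
    · exact absurd (mem_iUnion.2 ⟨d₀, mem_iUnion.2 ⟨hd₀, hzd₀⟩⟩) (hB m y hmy z hzy)
  have hcov : (⋃ d ∈ D, U d) = Set.univ := by
    rw [eq_univ_iff_forall]
    intro x
    by_cases hx : x ∈ Glt x
    · rw [hGlteq] at hx
      obtain ⟨y, hy⟩ := mem_iUnion.1 hx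
      obtain ⟨hryx, hzy⟩ := mem_iUnion.1 hy
      simp only [mem_iUnion] at hzy ⊢
      obtain ⟨d, hd, hxd⟩ := hzy
      exact ⟨d, mem_iUnion.2 ⟨y, hd⟩, hxd⟩
    · have : x ∈ (Glt x)ᶜ ∩ {y | x ≤ y} := ⟨hx, le_refl x⟩
      have hx2 := ((hF x).2 hx).2.2.2 this
      simp only [mem_iUnion] at hx2 ⊢
      obtain ⟨d, hd, hxd⟩ := hx2
      exact ⟨d, mem_iUnion.2 ⟨x, hd⟩, hxd⟩
  refine ⟨D, ?_, ?_, ?_⟩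
  · apply isClosed_of_closure_subset
    intro x hx
    have hxcov : x ∈ ⋃ d ∈ D, U d := hcov ▸ mem_univ x
    obtain ⟨W, m, hWo, hxW, hWD⟩ := hsep x hxcov
    have : x ∈ closure (F m) := by
      rw [mem_closure_iff] at hx ⊢
      intro O hO hxO
      obtain ⟨z, hzOW, hzD⟩ := hx (O ∩ W) (hO.inter hWo) ⟨hxO, hxW⟩
      exact ⟨z, hzOW.1, hWD ⟨hzOW.2, hzD⟩⟩
    rw [(hFc m).closure_eq] at this
    exact mem_iUnion.2 ⟨m, this⟩
  · rw [myDiscrete_iff]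
    intro x hx
    have hxcov : x ∈ ⋃ d ∈ D, U d := hcov ▸ mem_univ x
    obtain ⟨W, m, hWo, hxW, hWD⟩ := hsep x hxcov
    have hxFm : x ∈ F m := hWD ⟨hxW, hx⟩
    obtain ⟨V, hVo, hVe⟩ := (myDiscrete_iff.1 (hFd m)) x hxFm
    refine ⟨V ∩ W, hVo.inter hWo, ?_⟩
    apply Subset.antisymm
    · rintro z ⟨⟨hzV, hzW⟩, hzD⟩
      have : z ∈ V ∩ F m := ⟨hzV, hWD ⟨hzW, hzD⟩⟩
      rw [hVe] at this
      exact this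
    · rintro z rfl
      have hxV : z ∈ V := by
        have : z ∈ V ∩ F m := by rw [hVe]; rfl
        exact this.1
      exact ⟨⟨hxV, hxW⟩, hx⟩
  · rw [eq_univ_iff_forall]
    intro x
    have : x ∈ ⋃ d ∈ D, U d := hcov ▸ mem_univ x
    simp only [mem_iUnion] at this ⊢
    obtain ⟨d, hd, hxd⟩ := this
    exact ⟨d, hd, hxd.1⟩

lemma discreteTopology_of_homeo {X Y : Type*} [TopologicalSpace X] [TopologicalSpace Y]
    (e : X ≃ₜ Y) [DiscreteTopology X] : DiscreteTopology Y := by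
  rw [discreteTopology_iff_isOpen_singleton]
  intro y
  have : e '' {e.symm y} = {y} := by
    rw [image_singleton, e.apply_symm_apply]
  rw [← this]
  exact e.isOpenMap _ (isOpen_discrete _)

lemma isDSpace_of_homeo {X Y : Type*} [TopologicalSpace X] [TopologicalSpace Y]
    (e : X ≃ₜ Y) (h : IsDSpace X) : IsDSpace Y := by
  intro U hU
  obtain ⟨D, hDc, hDd, hDcov⟩ := h (fun x => e ⁻¹' U (e x))
    (fun x => ⟨(hU (e x)).1.preimage e.continuous, (hU (e x)).2⟩)
  refine ⟨e '' D, (e.isClosedMap) D hDc, discreteTopology_of_homeo (e.image D), ?_⟩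
  rw [eq_univ_iff_forall]
  intro y
  have : e.symm y ∈ ⋃ x ∈ D, e ⁻¹' U (e x) := hDcov ▸ mem_univ _
  simp only [mem_iUnion] at this ⊢
  obtain ⟨d, hd, hyd⟩ := this
  refine ⟨e d, ⟨d, hd, rfl⟩, ?_⟩
  have := mem_preimage.1 hyd
  rwa [e.apply_symm_apply] at this

def nestHomeo {X : Type*} [TopologicalSpace X] (A : Set X) (B : Set A) :
    B ≃ₜ (Subtype.val '' B : Set X) where
  toFun b := ⟨b.val.val, b.val, b.2, rfl⟩
  invFun x := ⟨⟨x.val, by obtain ⟨a, _, he⟩ := x.2; exact he ▸ a.2⟩, by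
    obtain ⟨a, ha, he⟩ := x.2
    have : (⟨x.val, by obtain ⟨a', _, he'⟩ := x.2; exact he' ▸ a'.2⟩ : A) = a :=
      Subtype.ext he.symm
    rw [this]
    exact ha⟩
  left_inv b := by apply Subtype.ext; apply Subtype.ext; rfl
  right_inv x := by apply Subtype.ext; rfl
  continuous_toFun := by
    apply Continuous.subtype_mk
    exact continuous_subtype_val.comp continuous_subtype_val
  continuous_invFun := by
    apply Continuous.subtype_mk
    apply Continuous.subtype_mk
    exact continuous_subtype_val

lemma nest_isDSpace {X : Type*} [TopologicalSpace X] {A : Set X} (B : Set A) :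
    IsDSpace B ↔ IsDSpace (Subtype.val '' B : Set X) :=
  ⟨fun h => isDSpace_of_homeo (nestHomeo A B) h,
   fun h => isDSpace_of_homeo (nestHomeo A B).symm h⟩

lemma isDSpace_congr_set {X : Type*} [TopologicalSpace X] {s t : Set X} (h : s = t) :
    IsDSpace s ↔ IsDSpace t := by rw [h]

lemma part2 {X : Type*} [TopologicalSpace X] [PartialOrder X]
    (htop : ∀ x : X, {y | y ≤ x} ∈ nhds x)
    (hD : ∀ x : X, HereditarilyD ({y | x ≤ y} : Set X)) : HereditarilyD X := by
  intro A
  apply part1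
  · intro a
    rw [nhds_subtype]
    exact Filter.preimage_mem_comap (htop a.val)
  · intro a
    have h2 : IsDSpace ↥(Subtype.val ⁻¹' A : Set ({y : X | a.val ≤ y})) := hD a.val _
    have h3 := (nest_isDSpace (A := {y : X | a.val ≤ y}) (Subtype.val ⁻¹' A)).1 h2
    rw [Subtype.image_preimage_coe] at h3
    rw [nest_isDSpace]
    have he : (Subtype.val '' {b : A | a ≤ b} : Set X) = {y : X | a.val ≤ y} ∩ A := by
      ext y
      constructor
      · rintro ⟨b, hb, rfl⟩
        exact ⟨hb, b.2⟩
      · rintro ⟨h1, h2⟩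
        exact ⟨⟨y, h2⟩, h1, rfl⟩
    rw [isDSpace_congr_set he]
    exact h3

end Aux

/-- For a topological partial order: if all up-sets are D then the space is D, and
if all up-sets are hereditarily D then the space is hereditarily D. -/
theorem isDSpace_of_upsets {X : Type*} [TopologicalSpace X] [PartialOrder X]
    (htop : ∀ x : X, {y | y ≤ x} ∈ nhds x) :
    ((∀ x : X, IsDSpace ({y | x ≤ y} : Set X)) → IsDSpace X) ∧
      ((∀ x : X, HereditarilyD ({y | x ≤ y} : Set X)) → HereditarilyD X) :=
  ⟨fun h => part1 htop h, fun h => part2 htop h⟩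
end
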